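/- Let E ⊆ ℂ be the splitting field over ℚ of the polynomial X³ − X² + 1. Then: (1) the complex number √(−23) = i·√23 lies in E, so E contains the field F = ℚ(√(−23)); (2) [E : ℚ] = 6; and (3) the extension E/F is a Galois extension of degree 3, and its Galois group Gal(E/F) is cyclic (of order 3). -/

import Mathlib

open Polynomial

/-- The splitting field inside `ℂ` of `X ^ 3 - X ^ 2 + 1` over `ℚ`. -/
noncomputable def Esplit : IntermediateField ℚ ℂ :=
  IntermediateField.adjoin ℚ ((X ^ 3 - X ^ 2 + 1 : Polynomial ℚ).rootSet ℂ)

/-- The field `F = ℚ(√(-23)) ⊆ ℂ`. -/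
noncomputable def Fsqrt : IntermediateField ℚ ℂ :=
  IntermediateField.adjoin ℚ {(Complex.I * Real.sqrt 23 : ℂ)}

open IntermediateField

private noncomputable def P : ℚ[X] := X ^ 3 - X ^ 2 + 1

private lemma P_monic : P.Monic := by unfold P; monicity!
private lemma P_deg : P.natDegree = 3 := by unfold P; compute_degree!

private lemma p2_irred : Irreducible (X ^ 3 + X ^ 2 + 1 : (ZMod 2)[X]) := by
  have hdeg : (X ^ 3 + X ^ 2 + 1 : (ZMod 2)[X]).natDegree = 3 := by compute_degree!
  have hne : (X ^ 3 + X ^ 2 + 1 : (ZMod 2)[X]) ≠ 0 := fun h => by simp [h] at hdeg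
  rw [Polynomial.irreducible_iff_roots_eq_zero_of_degree_le_three (by omega) (by omega),
    Multiset.eq_zero_iff_forall_notMem]
  intro x hx
  rw [mem_roots hne] at hx
  have h2 := hx
  clear hx
  simp only [IsRoot, eval_add, eval_pow, eval_X, eval_one] at h2
  revert h2
  revert x
  decide

private lemma pZ_irred : Irreducible (X ^ 3 - X ^ 2 + 1 : ℤ[X]) := by
  have hmon : (X ^ 3 - X ^ 2 + 1 : ℤ[X]).Monic := by monicity!
  apply hmon.irreducible_of_irreducible_map (Int.castRingHom (ZMod 2))
  have hmap : (X ^ 3 - X ^ 2 + 1 : ℤ[X]).map (Int.castRingHom (ZMod 2))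
      = X ^ 3 + X ^ 2 + 1 := by
    simp only [Polynomial.map_add, Polynomial.map_sub, Polynomial.map_pow, map_X,
      Polynomial.map_one]
    rw [sub_eq_add_neg, CharTwo.neg_eq]
  rw [hmap]
  exact p2_irred

private lemma P_irred : Irreducible P := by
  have hmon : (X ^ 3 - X ^ 2 + 1 : ℤ[X]).Monic := by monicity!
  have h := (hmon.irreducible_iff_irreducible_map_fraction_map (K := ℚ)).mp pZ_irred
  simp only [Polynomial.map_add, Polynomial.map_sub, Polynomial.map_pow, map_X,
    Polynomial.map_one] at h
  exact h

private noncomputable def Q23 : ℚ[X] := X ^ 2 + 23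

private lemma Q23_monic : Q23.Monic := by unfold Q23; monicity!
private lemma Q23_deg : Q23.natDegree = 2 := by unfold Q23; compute_degree!

private lemma Q23_irred : Irreducible Q23 := by
  rw [Polynomial.irreducible_iff_roots_eq_zero_of_degree_le_three (by rw [Q23_deg])
    (by rw [Q23_deg]; omega), Multiset.eq_zero_iff_forall_notMem]
  intro r hr
  rw [mem_roots Q23_monic.ne_zero] at hr
  have h := hr
  simp only [Q23, IsRoot, eval_add, eval_pow, eval_X, eval_ofNat] at h
  nlinarith [sq_nonneg r, h]

set_option maxHeartbeats 2000000 in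
set_option synthInstance.maxHeartbeats 400000 in
theorem splitting_field_facts :
    (Complex.I * Real.sqrt 23 : ℂ) ∈ Esplit ∧
    Module.finrank ℚ Esplit = 6 ∧
    ∃ h : Fsqrt ≤ Esplit,
      IsGalois Fsqrt (IntermediateField.extendScalars h) ∧
      Module.finrank Fsqrt (IntermediateField.extendScalars h) = 3 ∧
      IsCyclic ((IntermediateField.extendScalars h) ≃ₐ[Fsqrt]
        (IntermediateField.extendScalars h)) := by
  have hpsplits : (P.map (algebraMap ℚ ℂ)).Splits := IsAlgClosed.splits _
  have hcard : (P.map (algebraMap ℚ ℂ)).roots.card = 3 := by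
    rw [← hpsplits.natDegree_eq_card_roots, natDegree_map, P_deg]
  obtain ⟨a, b, c, habc⟩ := Multiset.card_eq_three.mp hcard
  have hprod : P.map (algebraMap ℚ ℂ) = (X - C a) * (X - C b) * (X - C c) := by
    have h := hpsplits.eq_prod_roots_of_monic (P_monic.map (algebraMap ℚ ℂ))
    rw [h, habc]
    simp only [Multiset.insert_eq_cons, Multiset.map_cons, Multiset.map_singleton,
      Multiset.prod_cons, Multiset.prod_singleton]
    ring
  have hpC : P.map (algebraMap ℚ ℂ) = X ^ 3 - X ^ 2 + 1 := by
    unfold P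
    simp only [Polynomial.map_add, Polynomial.map_sub, Polynomial.map_pow, map_X,
      Polynomial.map_one]
  have key : (X : ℂ[X]) ^ 3 - X ^ 2 + 1
      = X ^ 3 - C (a + b + c) * X ^ 2 + C (a * b + a * c + b * c) * X - C (a * b * c) := by
    rw [← hpC, hprod]
    simp only [C_add, C_mul]
    ring
  have h1 : a + b + c = 1 := by
    have h := congrArg (fun q => coeff q 2) key
    simp only [coeff_add, coeff_sub, coeff_C_mul, coeff_X_pow, coeff_one, coeff_C,
      coeff_X] at h
    norm_num at h
    linear_combination h
  have h2 : a * b + a * c + b * c = 0 := by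
    have h := congrArg (fun q => coeff q 1) key
    simp only [coeff_add, coeff_sub, coeff_C_mul, coeff_X_pow, coeff_one, coeff_C,
      coeff_X] at h
    norm_num at h
    linear_combination -h
  have h3 : a * b * c = -1 := by
    have h := congrArg (fun q => coeff q 0) key
    simp only [coeff_add, coeff_sub, coeff_C_mul, coeff_X_pow, coeff_one, coeff_C,
      coeff_X] at h
    norm_num at h
    linear_combination h
  -- root set membership
  have haev : ∀ x : ℂ, (Polynomial.aeval x) P = 0 ↔ (x = a ∨ x = b ∨ x = c) := by
    intro x
    rw [aeval_def, ← eval_map, hprod]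
    simp only [eval_mul, eval_sub, eval_X, eval_C, mul_eq_zero, sub_eq_zero]
    tauto
  have hmem : ∀ x : ℂ, x ∈ P.rootSet ℂ ↔ (x = a ∨ x = b ∨ x = c) := fun x => by
    rw [mem_rootSet]
    simp [P_monic.ne_zero, haev x]
  have hEdef : Esplit = adjoin ℚ (P.rootSet ℂ) := rfl
  have haE : a ∈ Esplit := hEdef ▸ subset_adjoin _ _ ((hmem a).2 (Or.inl rfl))
  have hbE : b ∈ Esplit := hEdef ▸ subset_adjoin _ _ ((hmem b).2 (Or.inr (Or.inl rfl)))
  have hcE : c ∈ Esplit := hEdef ▸ subset_adjoin _ _ ((hmem c).2 (Or.inr (Or.inr rfl)))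
  -- the square root of -23 lies in E
  set t : ℂ := Complex.I * Real.sqrt 23 with htdef
  have ht2 : t ^ 2 = -23 := by
    rw [htdef, mul_pow, Complex.I_sq, ← Complex.ofReal_pow,
      Real.sq_sqrt (by norm_num : (0:ℝ) ≤ 23)]
    norm_num
  have hdisc : ((a - b) * (a - c) * (b - c)) ^ 2 = -23 := by
    have expand : ((a - b) * (a - c) * (b - c)) ^ 2
        = (a + b + c) ^ 2 * (a * b + a * c + b * c) ^ 2
          - 4 * (a * b + a * c + b * c) ^ 3
          - 4 * (a + b + c) ^ 3 * (a * b * c)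
          + 18 * (a + b + c) * (a * b + a * c + b * c) * (a * b * c)
          - 27 * (a * b * c) ^ 2 := by ring
    rw [expand, h1, h2, h3]
    norm_num
  have htE : t ∈ Esplit := by
    have hδ : (a - b) * (a - c) * (b - c) ∈ Esplit :=
      mul_mem (mul_mem (sub_mem haE hbE) (sub_mem haE hcE)) (sub_mem hbE hcE)
    have hzero : (t - (a - b) * (a - c) * (b - c)) * (t + (a - b) * (a - c) * (b - c)) = 0 := by
      linear_combination ht2 - hdisc
    rcases mul_eq_zero.mp hzero with h | h
    · have : t = (a - b) * (a - c) * (b - c) := by linear_combination h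
      rw [this]; exact hδ
    · have : t = -((a - b) * (a - c) * (b - c)) := by linear_combination h
      rw [this]; exact neg_mem hδ
  have hFE : Fsqrt ≤ Esplit := by
    rw [show Fsqrt = adjoin ℚ {t} from rfl]
    exact adjoin_le_iff.mpr (Set.singleton_subset_iff.mpr htE)
  -- degrees
  have haint : IsIntegral ℚ a := ⟨P, P_monic, by rw [← aeval_def]; exact (haev a).2 (Or.inl rfl)⟩
  have hminA : minpoly ℚ a = P :=
    (minpoly.eq_of_irreducible_of_monic P_irred ((haev a).2 (Or.inl rfl)) P_monic).symm
  have hK3 : Module.finrank ℚ ℚ⟮a⟯ = 3 := by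
    rw [adjoin.finrank haint, hminA, P_deg]
  have htaev : (Polynomial.aeval t) Q23 = 0 := by
    unfold Q23
    simp only [map_add, map_pow, aeval_X, map_ofNat]
    rw [ht2]; ring
  have htint : IsIntegral ℚ t := ⟨Q23, Q23_monic, by rw [← aeval_def]; exact htaev⟩
  have hminT : minpoly ℚ t = Q23 :=
    (minpoly.eq_of_irreducible_of_monic Q23_irred htaev Q23_monic).symm
  have hF2 : Module.finrank ℚ Fsqrt = 2 := by
    rw [show Fsqrt = ℚ⟮t⟯ from rfl, adjoin.finrank htint, hminT, Q23_deg]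
  -- E = Q(a, b)
  have hEab : Esplit = adjoin ℚ {a, b} := by
    apply le_antisymm
    · rw [hEdef]
      apply adjoin_le_iff.mpr
      intro x hx
      rcases (hmem x).1 hx with h | h | h
      · rw [h]; exact subset_adjoin _ _ (Or.inl rfl)
      · rw [h]; exact subset_adjoin _ _ (Or.inr rfl)
      · have hc : c = 1 - a - b := by linear_combination h1
        rw [h, hc]
        exact sub_mem (sub_mem (one_mem _) (subset_adjoin _ _ (Or.inl rfl)))
          (subset_adjoin _ _ (Or.inr rfl))
    · apply adjoin_le_iff.mpr
      rintro x (rfl | rfl)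
      · exact haE
      · exact hbE
  have hKle : ℚ⟮a⟯ ≤ Esplit := by
    rw [hEab]
    exact adjoin.mono _ _ _ (Set.singleton_subset_iff.mpr (Or.inl rfl))
  -- [E : Q(a)] ≤ 2
  have hbint : IsIntegral ℚ b := ⟨P, P_monic, by rw [← aeval_def]; exact (haev b).2 (Or.inr (Or.inl rfl))⟩
  have hbintK : IsIntegral (↥ℚ⟮a⟯) b := hbint.tower_top
  have hqaev : Polynomial.aeval b ((X : (↥ℚ⟮a⟯)[X]) ^ 2 - C (1 - (AdjoinSimple.gen ℚ a)) * X + C ((AdjoinSimple.gen ℚ a) ^ 2 - (AdjoinSimple.gen ℚ a))) = 0 := by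
    simp only [map_add, map_sub, map_mul, map_pow, aeval_X, aeval_C, map_one]
    rw [AdjoinSimple.algebraMap_gen ℚ a]
    linear_combination (a + b) * h1 - h2
  have hqmonic : ((X : (↥ℚ⟮a⟯)[X]) ^ 2 - C (1 - (AdjoinSimple.gen ℚ a)) * X + C ((AdjoinSimple.gen ℚ a) ^ 2 - (AdjoinSimple.gen ℚ a))).Monic := by monicity!
  have hqdeg : ((X : (↥ℚ⟮a⟯)[X]) ^ 2 - C (1 - (AdjoinSimple.gen ℚ a)) * X + C ((AdjoinSimple.gen ℚ a) ^ 2 - (AdjoinSimple.gen ℚ a))).natDegree = 2 := by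
    compute_degree!
  have hdegb : (minpoly (↥ℚ⟮a⟯) b).natDegree ≤ 2 := by
    rw [← hqdeg]
    exact natDegree_le_of_dvd (minpoly.dvd _ b hqaev) hqmonic.ne_zero
  have hab_eq : adjoin (↥ℚ⟮a⟯) ({a, b} : Set ℂ) = adjoin (↥ℚ⟮a⟯) {b} := by
    apply le_antisymm
    · apply adjoin_le_iff.mpr
      rintro x (h | h)
      · rw [h, ← AdjoinSimple.algebraMap_gen ℚ a]
        exact (adjoin (↥ℚ⟮a⟯) {b}).algebraMap_mem (AdjoinSimple.gen ℚ a)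
      · rw [h]; exact subset_adjoin _ _ rfl
    · exact adjoin.mono _ _ _ (Set.singleton_subset_iff.mpr (Or.inr rfl))
  have hrel : IntermediateField.relfinrank ℚ⟮a⟯ Esplit ≤ 2 := by
    have hKle' : ℚ⟮a⟯ ≤ adjoin ℚ {a, b} := hEab ▸ hKle
    rw [hEab, relfinrank_eq_finrank_of_le hKle', extendScalars_adjoin hKle', hab_eq,
      adjoin.finrank hbintK]
    exact hdegb
  -- finite dimensionality
  haveI hfdE : FiniteDimensional ℚ ↥Esplit := by
    rw [hEab]
    haveI : Finite ↥({a, b} : Set ℂ) := ((Set.finite_singleton b).insert a).to_subtype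
    exact finiteDimensional_adjoin (fun x hx => by
      rcases hx with h | h
      · rw [h]; exact haint
      · rw [h]; exact hbint)
  have hdpos : 0 < Module.finrank ℚ ↥Esplit := Module.finrank_pos
  have hFtower := IntermediateField.finrank_bot_mul_relfinrank hFE
  rw [hF2, relfinrank_eq_finrank_of_le hFE] at hFtower
  have hKtower := IntermediateField.finrank_bot_mul_relfinrank hKle
  rw [hK3] at hKtower
  have hx3 : Module.finrank (↥Fsqrt) ↥(extendScalars hFE) = 3 := by omega
  have hd6 : Module.finrank ℚ ↥Esplit = 6 := by omega
  -- Galois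
  haveI hsf : Polynomial.IsSplittingField ℚ ↥Esplit P :=
    adjoin_rootSet_isSplittingField hpsplits
  haveI hgQ : IsGalois ℚ ↥Esplit := IsGalois.of_separable_splitting_field P_irred.separable
  haveI hgQ' : IsGalois ℚ ↥(extendScalars hFE) := inferInstanceAs (IsGalois ℚ ↥Esplit)
  haveI hfd' : FiniteDimensional ℚ ↥(extendScalars hFE) :=
    inferInstanceAs (FiniteDimensional ℚ ↥Esplit)
  haveI hgal : IsGalois (↥Fsqrt) ↥(extendScalars hFE) :=
    IsGalois.tower_top_of_isGalois ℚ (↥Fsqrt) ↥(extendScalars hFE)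
  haveI hfdF : FiniteDimensional (↥Fsqrt) ↥(extendScalars hFE) :=
    FiniteDimensional.right ℚ (↥Fsqrt) ↥(extendScalars hFE)
  have hcyc : IsCyclic (↥(extendScalars hFE) ≃ₐ[↥Fsqrt] ↥(extendScalars hFE)) := by
    haveI : Fact (Nat.Prime 3) := ⟨by norm_num⟩
    apply isCyclic_of_prime_card (p := 3)
    rw [IsGalois.card_aut_eq_finrank, hx3]
  exact ⟨htE, hd6, hFE, hgal, hx3, hcyc⟩
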